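/- (Quadratic decay, part ii) Under the setting of normalized covariant derivatives with positive C¹ metric g, let K be a C² kernel with K^{[2,0]}(θ,θ) = −1, L ≥ sup|K^{[2,0]}| finite, and suppose there exist ε > 0 and r ∈ (0, L^{-1/2}) such that −K^{[2,0]}(θ,θ₀) ≥ ε for all θ in B(θ₀,r). If f is C² with f(θ₀) = v ∈ {−1,1}, f^[1](θ₀) = 0, and |f^[2](θ) − v·K^{[2,0]}(θ,θ₀)| ≤ δ on B(θ₀,r) for some δ ∈ (0,ε), then |f(θ)| ≤ 1 − ((ε−δ)/2)·d(θ,θ₀)² for all θ ∈ B(θ₀,r). -/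

import Mathlib

/-- Auxiliary comparison lemma: if `F θ₀ = 0`, `F' = sg * q` with `sg > 0`,
`q θ₀ = 0` and `q' ≤ 0` on a convex set `S ∋ θ₀`, then `F ≤ 0` on `S`. -/
lemma quadratic_decay_aux (S : Set ℝ) (hS : Convex ℝ S) (θ₀ : ℝ) (h0 : θ₀ ∈ S)
    (q F q' sg : ℝ → ℝ)
    (hq : ∀ t, HasDerivAt q (q' t) t)
    (hq0 : q θ₀ = 0) (hF0 : F θ₀ = 0)
    (hq' : ∀ t ∈ S, q' t ≤ 0)
    (hsg : ∀ t, 0 < sg t)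
    (hF : ∀ t, HasDerivAt F (sg t * q t) t) :
    ∀ θ ∈ S, F θ ≤ 0 := by
  have hqdiff : Differentiable ℝ q := fun t => (hq t).differentiableAt
  have hFdiff : Differentiable ℝ F := fun t => (hF t).differentiableAt
  have hqa : AntitoneOn q S :=
    antitoneOn_of_deriv_nonpos hS hqdiff.continuous.continuousOn
      hqdiff.differentiableOn
      (fun x hx => by rw [(hq x).deriv]; exact hq' x (interior_subset hx))
  intro θ hθ
  rcases le_total θ₀ θ with h | h
  · have hconv : Convex ℝ (S ∩ Set.Ici θ₀) := hS.inter (convex_Ici θ₀)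
    have hFa : AntitoneOn F (S ∩ Set.Ici θ₀) := by
      refine antitoneOn_of_deriv_nonpos hconv hFdiff.continuous.continuousOn
        hFdiff.differentiableOn (fun x hx => ?_)
      have hx' := interior_subset hx
      rw [(hF x).deriv]
      have hqx : q x ≤ 0 := hq0 ▸ hqa h0 hx'.1 hx'.2
      exact mul_nonpos_of_nonneg_of_nonpos (hsg x).le hqx
    have h1 := hFa ⟨h0, le_refl θ₀⟩ ⟨hθ, h⟩ h
    rw [hF0] at h1; exact h1
  · have hconv : Convex ℝ (S ∩ Set.Iic θ₀) := hS.inter (convex_Iic θ₀)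
    have hFm : MonotoneOn F (S ∩ Set.Iic θ₀) := by
      refine monotoneOn_of_deriv_nonneg hconv hFdiff.continuous.continuousOn
        hFdiff.differentiableOn (fun x hx => ?_)
      have hx' := interior_subset hx
      rw [(hF x).deriv]
      have hqx : 0 ≤ q x := hq0 ▸ hqa hx'.1 h0 hx'.2
      exact mul_nonneg (hsg x).le hqx
    have h1 := hFm ⟨hθ, h⟩ ⟨h0, le_refl θ₀⟩ h
    rw [hF0] at h1; exact h1

/-- Quadratic decay (part ii): with `K^{[2,0]}(θ,θ) = −1`, `|K^{[2,0]}| ≤ L`,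
`−K^{[2,0]}(·,θ₀) ≥ ε` on the Riemannian ball `B(θ₀,r)` with `0 < r < L^{-1/2}`, if `f` is
`C²` with `f(θ₀) = v ∈ {−1,1}`, `f¹(θ₀) = 0` and `|f² − v K^{[2,0]}(·,θ₀)| ≤ δ` on `B(θ₀,r)`
for some `δ ∈ (0,ε)`, then `|f(θ)| ≤ 1 − ((ε−δ)/2) d(θ,θ₀)²` on `B(θ₀,r)`. -/
theorem quadratic_decay_ii
    (g G : ℝ → ℝ)
    (hg_pos : ∀ θ, 0 < g θ) (hg : ContDiff ℝ 1 g)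
    (hG : ∀ θ, HasDerivAt G (Real.sqrt (g θ)) θ)
    (K20 : ℝ → ℝ → ℝ)
    (hK20diag : ∀ θ, K20 θ θ = -1)
    (L : ℝ) (hL : ∀ θ θ', |K20 θ θ'| ≤ L)
    (θ₀ : ℝ) (ε r : ℝ) (hε : 0 < ε)
    (hr : 0 < r) (hrL : r < (Real.sqrt L)⁻¹)
    (hconc : ∀ θ, |G θ - G θ₀| ≤ r → ε ≤ - K20 θ θ₀)
    (f : ℝ → ℝ) (hf : ContDiff ℝ 2 f)
    (v : ℝ) (hv : v = 1 ∨ v = -1)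
    (hf0 : f θ₀ = v)
    (hf1 : deriv f θ₀ / Real.sqrt (g θ₀) = 0)
    (δ : ℝ) (hδ : 0 < δ) (hδε : δ < ε)
    (hf2 : ∀ θ, |G θ - G θ₀| ≤ r →
      |deriv (fun t => deriv f t / Real.sqrt (g t)) θ / Real.sqrt (g θ)
        - v * K20 θ θ₀| ≤ δ) :
    ∀ θ, |G θ - G θ₀| ≤ r → |f θ| ≤ 1 - (ε - δ) / 2 * |G θ - G θ₀| ^ 2 := by
  set sg : ℝ → ℝ := fun t => Real.sqrt (g t) with hsg_def
  have hsg : ∀ t, 0 < sg t := fun t => Real.sqrt_pos.2 (hg_pos t)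
  have hsgne : ∀ t, sg t ≠ 0 := fun t => (hsg t).ne'
  have hv2 : v * v = 1 := by rcases hv with h | h <;> simp [h]
  have hvabs : |v| = 1 := by rcases hv with h | h <;> simp [h]
  set S : Set ℝ := {t | |G t - G θ₀| ≤ r} with hS_def
  have h0S : θ₀ ∈ S := by simp [hS_def, hr.le]
  have hGmono : Monotone G := by
    refine (strictMono_of_deriv_pos (fun x => ?_)).monotone
    rw [(hG x).deriv]; exact hsg x
  have hSconv : Convex ℝ S := by
    refine Set.OrdConnected.convex ⟨fun x hx z hz y hy => ?_⟩
    simp only [hS_def, Set.mem_setOf_eq, abs_le] at hx hz ⊢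
    exact ⟨le_trans hx.1 (by linarith [hGmono hy.1]),
      le_trans (by linarith [hGmono hy.2]) hz.2⟩
  -- differentiability
  have hdf : ContDiff ℝ 1 (deriv f) := by
    have h2 : ContDiff ℝ ((1 : ℕ) + 1) f := by exact_mod_cast hf
    exact (contDiff_succ_iff_deriv.mp h2).2.2
  have hdfd : Differentiable ℝ (deriv f) := hdf.differentiable one_ne_zero
  have hfd : Differentiable ℝ f := hf.differentiable (by norm_num)
  have hsgdiff : Differentiable ℝ sg := fun t =>
    ((hg.differentiable one_ne_zero t).hasDerivAt.sqrt (hg_pos t).ne').differentiableAt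
  set p : ℝ → ℝ := fun t => deriv f t / Real.sqrt (g t) with hp_def
  have hpdiff : Differentiable ℝ p := hdfd.div hsgdiff hsgne
  have hp0 : p θ₀ = 0 := hf1
  have hdf_eq : ∀ t, deriv f t = p t * sg t :=
    fun t => (div_mul_cancel₀ (deriv f t) (hsgne t)).symm
  set f2 : ℝ → ℝ := fun t => deriv p t / sg t with hf2_def
  have hdp_eq : ∀ t, deriv p t = f2 t * sg t :=
    fun t => (div_mul_cancel₀ (deriv p t) (hsgne t)).symm
  -- bounds on v * f2 on S
  have habs : ∀ t ∈ S, |v * f2 t - K20 t θ₀| ≤ δ := by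
    intro t ht
    have h1 : |v * (f2 t - v * K20 t θ₀)| ≤ δ := by
      rw [abs_mul, hvabs, one_mul]; exact hf2 t ht
    have heq : v * (f2 t - v * K20 t θ₀) = v * f2 t - K20 t θ₀ := by
      linear_combination (-(K20 t θ₀)) * hv2
    rwa [heq] at h1
  have hub : ∀ t ∈ S, v * f2 t ≤ -(ε - δ) := by
    intro t ht
    have h1 := (abs_le.mp (habs t ht)).2
    have h2 := hconc t ht
    linarith
  have hlb : ∀ t ∈ S, -(L + δ) ≤ v * f2 t := by
    intro t ht
    have h1 := (abs_le.mp (habs t ht)).1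
    have h2 := (abs_le.mp (hL t θ₀)).1
    linarith
  set c : ℝ := (ε - δ) / 2 with hc_def
  set C : ℝ := (L + δ) / 2 with hC_def
  -- upper bound: F ≤ 0 on S
  have hFle : ∀ θ ∈ S, v * f θ - (1 - c * (G θ - G θ₀) ^ 2) ≤ 0 := by
    refine quadratic_decay_aux S hSconv θ₀ h0S
      (fun t => v * p t + 2 * c * (G t - G θ₀))
      (fun t => v * f t - (1 - c * (G t - G θ₀) ^ 2))
      (fun t => sg t * (v * f2 t + 2 * c)) sg ?_ ?_ ?_ ?_ hsg ?_
    · intro t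
      have h1 : HasDerivAt (fun s => v * p s) (v * deriv p t) t :=
        (hpdiff t).hasDerivAt.const_mul v
      have h2 : HasDerivAt (fun s => 2 * c * (G s - G θ₀)) (2 * c * sg t) t := by
        simpa using ((hG t).sub_const (G θ₀)).const_mul (2 * c)
      refine (h1.add h2).congr_deriv ?_
      rw [hdp_eq t]; ring
    · simp [hp0]
    · simp [hf0, hv2]
    · intro t ht
      have h3 : v * f2 t + 2 * c ≤ 0 := by
        have h1 := hub t ht; rw [hc_def]; linarith
      exact mul_nonpos_of_nonneg_of_nonpos (hsg t).le h3
    · intro t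
      have h1 : HasDerivAt (fun s => v * f s) (v * deriv f t) t :=
        (hfd t).hasDerivAt.const_mul v
      have h2 : HasDerivAt (fun s => (1 : ℝ) - c * (G s - G θ₀) ^ 2)
          (-(c * (2 * (G t - G θ₀) ^ 1 * sg t))) t := by
        exact ((((hG t).sub_const (G θ₀)).pow 2).const_mul c).const_sub 1
      refine (h1.sub h2).congr_deriv ?_
      rw [hdf_eq t]; ring
  -- lower bound: F2 ≤ 0 on S
  have hF2le : ∀ θ ∈ S, (1 - C * (G θ - G θ₀) ^ 2) - v * f θ ≤ 0 := by
    refine quadratic_decay_aux S hSconv θ₀ h0S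
      (fun t => -(v * p t) - 2 * C * (G t - G θ₀))
      (fun t => (1 - C * (G t - G θ₀) ^ 2) - v * f t)
      (fun t => sg t * (-(v * f2 t) - 2 * C)) sg ?_ ?_ ?_ ?_ hsg ?_
    · intro t
      have h1 : HasDerivAt (fun s => -(v * p s)) (-(v * deriv p t)) t :=
        ((hpdiff t).hasDerivAt.const_mul v).neg
      have h2 : HasDerivAt (fun s => 2 * C * (G s - G θ₀)) (2 * C * sg t) t := by
        simpa using ((hG t).sub_const (G θ₀)).const_mul (2 * C)
      refine (h1.sub h2).congr_deriv ?_
      rw [hdp_eq t]; ring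
    · simp [hp0]
    · simp [hf0, hv2]
    · intro t ht
      have h3 : -(v * f2 t) - 2 * C ≤ 0 := by
        have h1 := hlb t ht; rw [hC_def]; linarith
      exact mul_nonpos_of_nonneg_of_nonpos (hsg t).le h3
    · intro t
      have h1 : HasDerivAt (fun s => v * f s) (v * deriv f t) t :=
        (hfd t).hasDerivAt.const_mul v
      have h2 : HasDerivAt (fun s => (1 : ℝ) - C * (G s - G θ₀) ^ 2)
          (-(C * (2 * (G t - G θ₀) ^ 1 * sg t))) t := by
        exact ((((hG t).sub_const (G θ₀)).pow 2).const_mul C).const_sub 1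
      refine (h2.sub h1).congr_deriv ?_
      rw [hdf_eq t]; ring
  -- arithmetic and conclusion
  have hL1 : 1 ≤ L := by
    have := hL θ₀ θ₀
    rw [hK20diag θ₀] at this
    simpa using this
  have hε1 : ε ≤ 1 := by
    have := hconc θ₀ (by simpa using hr.le)
    rw [hK20diag θ₀] at this
    linarith
  have hsqL : 0 < Real.sqrt L := Real.sqrt_pos.2 (by linarith)
  have hrsq : L * r ^ 2 < 1 := by
    have h1 : r ^ 2 < ((Real.sqrt L)⁻¹) ^ 2 := by
      apply pow_lt_pow_left₀ hrL hr.le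
      norm_num
    have h2 : ((Real.sqrt L)⁻¹) ^ 2 = L⁻¹ := by
      rw [inv_pow, Real.sq_sqrt (by linarith : (0:ℝ) ≤ L)]
    rw [h2] at h1
    have hLpos : (0:ℝ) < L := by linarith
    calc L * r ^ 2 < L * L⁻¹ := by
          exact mul_lt_mul_of_pos_left h1 hLpos
      _ = 1 := mul_inv_cancel₀ hLpos.ne'
  intro θ hθ
  have hθS : θ ∈ S := hθ
  have h1 := hFle θ hθS
  have h2 := hF2le θ hθS
  have hsabs : |G θ - G θ₀| ^ 2 = (G θ - G θ₀) ^ 2 := sq_abs _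
  have hs2 : (G θ - G θ₀) ^ 2 ≤ r ^ 2 := by
    rw [← hsabs]
    exact pow_le_pow_left₀ (abs_nonneg _) hθ 2
  have hr2 : r ^ 2 ≤ 1 := by nlinarith
  have key : |v * f θ| ≤ 1 - c * (G θ - G θ₀) ^ 2 := by
    rw [abs_le]
    constructor
    · -- -(1 - c s²) ≤ 1 - C s² ≤ v f θ
      have : (C + c) * (G θ - G θ₀) ^ 2 ≤ 2 := by
        have hCc : C + c = (L + ε) / 2 := by rw [hC_def, hc_def]; ring
        rw [hCc]
        nlinarith [sq_nonneg (G θ - G θ₀)]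
      linarith
    · linarith
  have : |f θ| = |v * f θ| := by rw [abs_mul, hvabs, one_mul]
  rw [this, hsabs]
  exact key
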